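/- Let M be a matching in a graph G with no augmenting paths of length ≤ 2K−1. Let M' be obtained from M by flipping a set of pairwise vertex-disjoint (2K+1)-augmenting paths. If p is an augmenting path for M' of length ≤ 2K+1, then p is already an augmenting path for M (i.e., p contains no flipped edge). -/

import Mathlib

variable {V : Type*}

/-- The list of edges of a path given by its list of vertices. -/
def pathEdges (p : List V) : List (Sym2 V) :=
  List.zipWith (fun a b => s(a, b)) p p.tail

/-- `M` is a matching in `G`: a set of edges of `G` no two of which share a vertex. -/
def IsMatching (G : SimpleGraph V) (M : Set (Sym2 V)) : Prop :=
  M ⊆ G.edgeSet ∧ ∀ e ∈ M, ∀ f ∈ M, e ≠ f → ∀ v : V, v ∈ e → v ∉ f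

/-- A vertex is covered by `M` if it is incident with some edge of `M`. -/
def Covered (M : Set (Sym2 V)) (v : V) : Prop :=
  ∃ e ∈ M, v ∈ e

/-- `p` (a list of vertices) is an augmenting path for the matching `M` in `G`:
a simple path whose edges alternate out of/in `M` (starting and ending with a
non-matching edge, so it has an odd number of edges, i.e. an even number of
vertices) and whose endpoints are uncovered by `M`. -/
def IsAugPath (G : SimpleGraph V) (M : Set (Sym2 V)) (p : List V) : Prop :=
  p.Nodup ∧ p.Chain' G.Adj ∧ 2 ≤ p.length ∧ p.length % 2 = 0 ∧
  (∀ (i : ℕ) (h : i < (pathEdges p).length),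
      ((pathEdges p).get ⟨i, h⟩ ∈ M ↔ i % 2 = 1)) ∧
  (∀ v : V, p.head? = some v ∨ p.getLast? = some v → ¬ Covered M v)

theorem pathEdges_length (p : List V) : (pathEdges p).length = p.length - 1 := by
  simp [pathEdges]

theorem pathEdges_get (p : List V) (i : ℕ) (h : i < (pathEdges p).length) :
    (pathEdges p).get ⟨i, h⟩ = s(p.get ⟨i, by simp [pathEdges_length] at h; omega⟩,
      p.get ⟨i+1, by simp [pathEdges_length] at h; omega⟩) := by
  simp only [pathEdges, List.get_eq_getElem, List.getElem_zipWith]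
  congr 1
  rw [List.getElem_tail]

theorem mem_pathEdges_iff {p : List V} {e : Sym2 V} :
    e ∈ pathEdges p ↔ ∃ i : ℕ, ∃ h : i + 1 < p.length,
      e = s(p.get ⟨i, by omega⟩, p.get ⟨i+1, h⟩) := by
  rw [List.mem_iff_get]
  constructor
  · rintro ⟨⟨i, hi⟩, rfl⟩
    have hi' : i + 1 < p.length := by simp [pathEdges_length] at hi; omega
    exact ⟨i, hi', by rw [pathEdges_get]⟩
  · rintro ⟨i, hi, rfl⟩
    have hi' : i < (pathEdges p).length := by simp [pathEdges_length]; omega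
    exact ⟨⟨i, hi'⟩, by rw [pathEdges_get]⟩

theorem mem_of_mem_pathEdges {p : List V} {e : Sym2 V} (he : e ∈ pathEdges p)
    {v : V} (hv : v ∈ e) : v ∈ p := by
  rw [mem_pathEdges_iff] at he
  obtain ⟨i, hi, rfl⟩ := he
  rcases Sym2.mem_iff.1 hv with rfl | rfl
  · exact List.get_mem _ _
  · exact List.get_mem _ _

theorem get_inj_of_nodup {p : List V} (hnd : p.Nodup) {i j : ℕ}
    (hi : i < p.length) (hj : j < p.length) (h : p.get ⟨i, hi⟩ = p.get ⟨j, hj⟩) : i = j := by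
  have := List.nodup_iff_injective_get.1 hnd h
  exact congrArg Fin.val this

/-- the index of an edge in the pathEdges of a nodup list is determined. -/
theorem pathEdges_index_inj {p : List V} (hnd : p.Nodup) {i j : ℕ}
    (hi : i + 1 < p.length) (hj : j + 1 < p.length)
    (h : s(p.get ⟨i, by omega⟩, p.get ⟨i+1, hi⟩) = s(p.get ⟨j, by omega⟩, p.get ⟨j+1, hj⟩)) :
    i = j := by
  rw [Sym2.eq_iff] at h
  rcases h with ⟨h1, _⟩ | ⟨h1, h2⟩
  · exact get_inj_of_nodup hnd _ _ h1
  · have e1 := get_inj_of_nodup hnd _ _ h1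
    have e2 := get_inj_of_nodup hnd _ _ h2
    omega

section A
variable {G : SimpleGraph V} {M : Set (Sym2 V)} {r : List V}

theorem aug_edge_mem (hr : IsAugPath G M r) {i : ℕ} (h : i + 1 < r.length) :
    (s(r.get ⟨i, by omega⟩, r.get ⟨i+1, h⟩) ∈ M ↔ i % 2 = 1) := by
  have h' : i < (pathEdges r).length := by rw [pathEdges_length]; omega
  have := hr.2.2.2.2.1 i h'
  rwa [pathEdges_get] at this

theorem head?_get' {l : List V} (h : 0 < l.length) : l.head? = some (l.get ⟨0, h⟩) := by
  cases l with
  | nil => simp at h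
  | cons a t => rfl

theorem getLast?_get' {l : List V} (h : 0 < l.length) :
    l.getLast? = some (l.get ⟨l.length - 1, by omega⟩) := by
  have hne : l ≠ [] := by intro hh; rw [hh] at h; simp at h
  rw [List.getLast?_eq_getLast hne, List.getLast_eq_getElem]; rfl

theorem aug_head_free (hr : IsAugPath G M r) :
    ¬ Covered M (r.get ⟨0, by have := hr.2.2.1; omega⟩) := by
  apply hr.2.2.2.2.2
  left
  exact head?_get' (by have := hr.2.2.1; omega)

theorem aug_last_free (hr : IsAugPath G M r) :
    ¬ Covered M (r.get ⟨r.length - 1, by have := hr.2.2.1; omega⟩) := by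
  apply hr.2.2.2.2.2
  right
  exact getLast?_get' (by have := hr.2.2.1; omega)

theorem aug_interior_edge (hr : IsAugPath G M r) {t : ℕ} (h0 : 0 < t)
    (h1 : t + 1 < r.length) :
    ∃ j : ℕ, ∃ hj : j + 1 < r.length,
      s(r.get ⟨j, by omega⟩, r.get ⟨j+1, hj⟩) ∈ M ∧ (t = j ∨ t = j + 1) := by
  by_cases ht : t % 2 = 1
  · exact ⟨t, h1, (aug_edge_mem hr h1).2 ht, Or.inl rfl⟩
  · have hj : (t - 1) + 1 < r.length := by omega
    refine ⟨t - 1, hj, ?_, Or.inr (by omega)⟩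
    exact (aug_edge_mem hr hj).2 (by omega)

theorem aug_interior_covered (hr : IsAugPath G M r) {t : ℕ} (h0 : 0 < t)
    (h1 : t + 1 < r.length) : Covered M (r.get ⟨t, by omega⟩) := by
  obtain ⟨j, hj, hmem, hor⟩ := aug_interior_edge hr h0 h1
  refine ⟨_, hmem, ?_⟩
  rcases hor with rfl | rfl
  · exact Sym2.mem_mk_left _ _
  · exact Sym2.mem_mk_right _ _

section Generic
variable {G : SimpleGraph V} {M₀ : Set (Sym2 V)} {Q : Set (List V)}

/-- the set of all edges of all paths in `Q`. -/
def flipSet (Q : Set (List V)) : Set (Sym2 V) := {e | ∃ r ∈ Q, e ∈ pathEdges r}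

theorem pathEdges_sub_edgeSet {l : List V} (hl : l.Chain' G.Adj) {e : Sym2 V}
    (he : e ∈ pathEdges l) : e ∈ G.edgeSet := by
  rw [mem_pathEdges_iff] at he
  obtain ⟨i, hi, rfl⟩ := he
  exact (List.isChain_iff_getElem.1 hl) i (by omega)

theorem flipSet_sub (hQ : ∀ r ∈ Q, IsAugPath G M₀ r) : flipSet Q ⊆ G.edgeSet := by
  rintro e ⟨r, hr, he⟩
  exact pathEdges_sub_edgeSet (hQ r hr).2.1 he

theorem path_unique (hdisjQ : ∀ r ∈ Q, ∀ s ∈ Q, r ≠ s → ∀ v : V, v ∈ r → v ∉ s)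
    {r s : List V} (hr : r ∈ Q) (hs : s ∈ Q) {v : V} (hvr : v ∈ r) (hvs : v ∈ s) :
    r = s := by
  by_contra hne
  exact hdisjQ r hr s hs hne v hvr hvs

/-- the `M₀`-edge at an interior vertex of an augmenting path is an edge of the path,
namely the adjacent odd-indexed one. -/
theorem aug_interior_M_edge (hM₀ : IsMatching G M₀) {r : List V}
    (hr : IsAugPath G M₀ r) {t : ℕ} (h0 : 0 < t) (h1 : t + 1 < r.length)
    {e : Sym2 V} (he : e ∈ M₀) (hv : r.get ⟨t, by omega⟩ ∈ e) :
    ∃ j : ℕ, ∃ hj : j + 1 < r.length,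
      e = s(r.get ⟨j, by omega⟩, r.get ⟨j+1, hj⟩) ∧ (t = j ∨ t = j + 1) := by
  obtain ⟨j, hj, hmem, hor⟩ := aug_interior_edge hr h0 h1
  refine ⟨j, hj, ?_, hor⟩
  by_contra hne
  have hvg : r.get ⟨t, by omega⟩ ∈ s(r.get ⟨j, by omega⟩, r.get ⟨j+1, hj⟩) := by
    rcases hor with rfl | rfl
    · exact Sym2.mem_mk_left _ _
    · exact Sym2.mem_mk_right _ _
  exact hM₀.2 e he _ hmem hne _ hv hvg

/-- an endpoint of a nodup list belongs to at most one edge of the path, and for an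
augmenting path that edge is not in `M₀`. -/
theorem endpoint_edge_not_mem {r : List V} (hr : IsAugPath G M₀ r)
    {e : Sym2 V} (he : e ∈ pathEdges r)
    (hv : (r.get ⟨0, by have := hr.2.2.1; omega⟩ ∈ e) ∨
      (r.get ⟨r.length - 1, by have := hr.2.2.1; omega⟩ ∈ e)) : e ∉ M₀ := by
  have hL := hr.2.2.1
  have hpar := hr.2.2.2.1
  rw [mem_pathEdges_iff] at he
  obtain ⟨i, hi, rfl⟩ := he
  intro hmem
  have hodd := (aug_edge_mem hr hi).1 hmem
  rcases hv with hv | hv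
  · rcases Sym2.mem_iff.1 hv with h | h
    · have := get_inj_of_nodup hr.1 _ _ h.symm
      omega
    · have := get_inj_of_nodup hr.1 _ _ h.symm
      omega
  · rcases Sym2.mem_iff.1 hv with h | h
    · have := get_inj_of_nodup hr.1 _ _ h.symm
      omega
    · have := get_inj_of_nodup hr.1 _ _ h.symm
      omega

/-- flipping a family of disjoint augmenting paths covers every vertex on the paths,
by an edge of the path not in `M₀`. -/
theorem flip_covers (hQ : ∀ r ∈ Q, IsAugPath G M₀ r) {r : List V} (hr : r ∈ Q)
    {t : ℕ} (ht : t < r.length) :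
    ∃ e : Sym2 V, e ∈ symmDiff M₀ (flipSet Q) ∧ e ∉ M₀ ∧ e ∈ pathEdges r ∧
      r.get ⟨t, ht⟩ ∈ e := by
  have haug := hQ r hr
  have hL := haug.2.2.1
  have hpar := haug.2.2.2.1
  have key : ∀ j : ℕ, ∀ hj : j + 1 < r.length, j % 2 = 0 →
      s(r.get ⟨j, by omega⟩, r.get ⟨j+1, hj⟩) ∈ symmDiff M₀ (flipSet Q) ∧
      s(r.get ⟨j, by omega⟩, r.get ⟨j+1, hj⟩) ∉ M₀ ∧
      s(r.get ⟨j, by omega⟩, r.get ⟨j+1, hj⟩) ∈ pathEdges r := by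
    intro j hj hje
    have hnm : s(r.get ⟨j, by omega⟩, r.get ⟨j+1, hj⟩) ∉ M₀ := by
      intro hmem
      have := (aug_edge_mem haug hj).1 hmem
      omega
    have hpe : s(r.get ⟨j, by omega⟩, r.get ⟨j+1, hj⟩) ∈ pathEdges r := by
      rw [mem_pathEdges_iff]
      exact ⟨j, hj, rfl⟩
    exact ⟨Set.mem_symmDiff.2 (Or.inr ⟨⟨r, hr, hpe⟩, hnm⟩), hnm, hpe⟩
  by_cases hte : t % 2 = 0
  · have ht1 : t + 1 < r.length := by omega
    obtain ⟨h1, h2, h3⟩ := key t ht1 hte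
    exact ⟨_, h1, h2, h3, Sym2.mem_mk_left _ _⟩
  · have hj : (t - 1) + 1 < r.length := by omega
    obtain ⟨h1, h2, h3⟩ := key (t-1) hj (by omega)
    refine ⟨_, h1, h2, h3, ?_⟩
    have : t - 1 + 1 = t := by omega
    simp only [this]
    exact Sym2.mem_mk_right _ _

theorem covered_flip_of_mem_path (hQ : ∀ r ∈ Q, IsAugPath G M₀ r) {r : List V}
    (hr : r ∈ Q) {v : V} (hv : v ∈ r) : Covered (symmDiff M₀ (flipSet Q)) v := by
  rw [List.mem_iff_get] at hv
  obtain ⟨⟨t, ht⟩, rfl⟩ := hv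
  obtain ⟨e, he, -, -, hve⟩ := flip_covers hQ hr ht
  exact ⟨e, he, hve⟩

theorem flip_mixed (hM₀ : IsMatching G M₀) (hQ : ∀ r ∈ Q, IsAugPath G M₀ r)
    {e f : Sym2 V} (heM : e ∈ M₀) (heF : e ∉ flipSet Q)
    (hfF : f ∈ flipSet Q) {v : V} (hve : v ∈ e) (hvf : v ∈ f) : False := by
  obtain ⟨r, hr, hfpe⟩ := hfF
  have haug := hQ r hr
  have hL := haug.2.2.1
  have hvr : v ∈ r := mem_of_mem_pathEdges hfpe hvf
  rw [List.mem_iff_get] at hvr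
  obtain ⟨⟨t, ht⟩, rfl⟩ := hvr
  have : t = 0 ∨ t = r.length - 1 ∨ (0 < t ∧ t + 1 < r.length) := by omega
  rcases this with rfl | ht1 | ⟨h0, h1⟩
  · exact aug_head_free haug ⟨e, heM, hve⟩
  · subst ht1
    exact aug_last_free haug ⟨e, heM, hve⟩
  · obtain ⟨j, hj, rfl, -⟩ := aug_interior_M_edge hM₀ haug h0 h1 heM hve
    refine heF ⟨r, hr, ?_⟩
    rw [mem_pathEdges_iff]
    exact ⟨j, hj, rfl⟩

theorem flip_matching (hM₀ : IsMatching G M₀) (hQ : ∀ r ∈ Q, IsAugPath G M₀ r)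
    (hdisjQ : ∀ r ∈ Q, ∀ s ∈ Q, r ≠ s → ∀ v : V, v ∈ r → v ∉ s) :
    IsMatching G (symmDiff M₀ (flipSet Q)) := by
  constructor
  · intro e he
    rcases Set.mem_symmDiff.1 he with ⟨h1, -⟩ | ⟨h1, -⟩
    · exact hM₀.1 h1
    · exact flipSet_sub hQ h1
  · intro e he f hf hne v hve hvf
    rcases Set.mem_symmDiff.1 he with ⟨heM, heF⟩ | ⟨heF, heM⟩ <;>
      rcases Set.mem_symmDiff.1 hf with ⟨hfM, hfF⟩ | ⟨hfF, hfM⟩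
    · exact hM₀.2 e heM f hfM hne v hve hvf
    · exact flip_mixed hM₀ hQ heM heF hfF hve hvf
    · exact flip_mixed hM₀ hQ hfM hfF heF hvf hve
    · -- both in flipSet \ M₀
      obtain ⟨r, hr, hepe⟩ := heF
      obtain ⟨r', hr', hfpe⟩ := hfF
      have hvr : v ∈ r := mem_of_mem_pathEdges hepe hve
      have hvr' : v ∈ r' := mem_of_mem_pathEdges hfpe hvf
      obtain rfl : r = r' := path_unique hdisjQ hr hr' hvr hvr'
      have haug := hQ r hr
      rw [mem_pathEdges_iff] at hepe hfpe
      obtain ⟨i, hi, rfl⟩ := hepe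
      obtain ⟨j, hj, rfl⟩ := hfpe
      have hie : i % 2 = 0 := by
        have h1 : ¬ (i % 2 = 1) := fun h => heM ((aug_edge_mem haug hi).2 h)
        omega
      have hje : j % 2 = 0 := by
        have h1 : ¬ (j % 2 = 1) := fun h => hfM ((aug_edge_mem haug hj).2 h)
        omega
      have hij : i = j := by
        rcases Sym2.mem_iff.1 hve with rfl | rfl <;>
          rcases Sym2.mem_iff.1 hvf with h | h <;>
          have := get_inj_of_nodup haug.1 _ _ h <;> omega
      subst hij
      exact hne rfl

theorem covered_flip_of_covered (hQ : ∀ r ∈ Q, IsAugPath G M₀ r) {v : V}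
    (hv : Covered M₀ v) : Covered (symmDiff M₀ (flipSet Q)) v := by
  obtain ⟨e, heM, hve⟩ := hv
  by_cases heF : e ∈ flipSet Q
  · obtain ⟨r, hr, hpe⟩ := heF
    exact covered_flip_of_mem_path hQ hr (mem_of_mem_pathEdges hpe hve)
  · exact ⟨e, Set.mem_symmDiff.2 (Or.inl ⟨heM, heF⟩), hve⟩

end Generic

open scoped Classical

/-- The context of the theorem. -/
structure HK (V : Type*) where
  G : SimpleGraph V
  M : Set (Sym2 V)
  hM : IsMatching G M
  K : ℕ
  hK : 1 ≤ K
  hno : ∀ r : List V, IsAugPath G M r → r.length ≤ 2 * K → False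
  P : Set (List V)
  hP : ∀ r ∈ P, IsAugPath G M r ∧ r.length = 2 * K + 2
  hdisj : ∀ r ∈ P, ∀ s ∈ P, r ≠ s → ∀ v : V, v ∈ r → v ∉ s
  p : List V
  hp : IsAugPath G (symmDiff M (flipSet P)) p
  hlen : p.length ≤ 2 * K + 2

namespace HK

variable {V : Type*} (C : HK V)

def M1 : Set (Sym2 V) := symmDiff C.M (flipSet C.P)

def pE : Set (Sym2 V) := flipSet {C.p}

def N : Set (Sym2 V) := symmDiff C.M1 C.pE

theorem hQP : ∀ r ∈ C.P, IsAugPath C.G C.M r := fun r hr => (C.hP r hr).1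

theorem hp' : IsAugPath C.G C.M1 C.p := C.hp

theorem M1_matching : IsMatching C.G C.M1 :=
  flip_matching C.hM C.hQP C.hdisj

theorem hQp : ∀ r ∈ ({C.p} : Set (List V)), IsAugPath C.G C.M1 r := by
  intro r hr
  rcases hr with rfl
  exact C.hp'

theorem hdisjp : ∀ r ∈ ({C.p} : Set (List V)), ∀ s ∈ ({C.p} : Set (List V)),
    r ≠ s → ∀ v : V, v ∈ r → v ∉ s := by
  rintro r rfl s rfl hne
  exact absurd rfl hne

theorem N_matching : IsMatching C.G C.N :=
  flip_matching C.M1_matching C.hQp C.hdisjp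

theorem cov_M_M1 {v : V} (hv : Covered C.M v) : Covered C.M1 v :=
  covered_flip_of_covered C.hQP hv

theorem cov_M1_N {v : V} (hv : Covered C.M1 v) : Covered C.N v :=
  covered_flip_of_covered C.hQp hv

theorem cov_path_M1 {r : List V} (hr : r ∈ C.P) {v : V} (hv : v ∈ r) :
    Covered C.M1 v :=
  covered_flip_of_mem_path C.hQP hr hv

theorem lenp_ge : 2 ≤ C.p.length := C.hp'.2.2.1
theorem lenp_even : C.p.length % 2 = 0 := C.hp'.2.2.2.1

def v0 : V := C.p.get ⟨0, by have := C.lenp_ge; omega⟩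
def vm : V := C.p.get ⟨C.p.length - 1, by have := C.lenp_ge; omega⟩

theorem v0_free_M1 : ¬ Covered C.M1 C.v0 := aug_head_free C.hp'
theorem vm_free_M1 : ¬ Covered C.M1 C.vm := aug_last_free C.hp'
theorem v0_free_M : ¬ Covered C.M C.v0 := fun h => C.v0_free_M1 (C.cov_M_M1 h)
theorem vm_free_M : ¬ Covered C.M C.vm := fun h => C.vm_free_M1 (C.cov_M_M1 h)
theorem v0_notin_path {r : List V} (hr : r ∈ C.P) : C.v0 ∉ r :=
  fun h => C.v0_free_M1 (C.cov_path_M1 hr h)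
theorem vm_notin_path {r : List V} (hr : r ∈ C.P) : C.vm ∉ r :=
  fun h => C.vm_free_M1 (C.cov_path_M1 hr h)
theorem v0_ne_vm : C.v0 ≠ C.vm := by
  intro h
  have := get_inj_of_nodup C.hp'.1 _ _ h
  have := C.lenp_ge
  omega

def Delta : Set (Sym2 V) := symmDiff C.M C.N

theorem Delta_eq : C.Delta = symmDiff (flipSet C.P) C.pE := by
  rw [Delta, N, M1, ← symmDiff_assoc, symmDiff_symmDiff_cancel_left]

theorem Delta_sub {e : Sym2 V} (he : e ∈ C.Delta) : e ∈ flipSet C.P ∨ e ∈ pathEdges C.p := by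
  rw [Delta_eq] at he
  rcases Set.mem_symmDiff.1 he with ⟨h, -⟩ | ⟨h, -⟩
  · exact Or.inl h
  · right
    obtain ⟨r, hr, hpe⟩ := h
    rcases hr with rfl
    exact hpe

/-- Edge of type `b` between `v` and `w`: `true` means `N \ M`, `false` means `M \ N`. -/
def ET (b : Bool) (v w : V) : Prop :=
  if b then (s(v, w) ∈ C.N ∧ s(v, w) ∉ C.M) else (s(v, w) ∈ C.M ∧ s(v, w) ∉ C.N)

theorem ET_true {v w : V} : C.ET true v w ↔ (s(v, w) ∈ C.N ∧ s(v, w) ∉ C.M) := by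
  simp [ET]

theorem ET_false {v w : V} : C.ET false v w ↔ (s(v, w) ∈ C.M ∧ s(v, w) ∉ C.N) := by
  simp [ET]

theorem ET_symm {b : Bool} {v w : V} (h : C.ET b v w) : C.ET b w v := by
  cases b <;> [rw [ET_false] at *; rw [ET_true] at *] <;> rwa [Sym2.eq_swap]

theorem ET_sub_G {b : Bool} {v w : V} (h : C.ET b v w) : s(v,w) ∈ C.G.edgeSet := by
  cases b
  · exact C.hM.1 (C.ET_false.1 h).1
  · exact C.N_matching.1 (C.ET_true.1 h).1

theorem ET_adj {b : Bool} {v w : V} (h : C.ET b v w) : C.G.Adj v w :=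
  C.ET_sub_G h

theorem ET_ne {b : Bool} {v w : V} (h : C.ET b v w) : v ≠ w :=
  (C.ET_adj h).ne

theorem ET_unique {b : Bool} {v w w' : V} (h : C.ET b v w) (h' : C.ET b v w') : w = w' := by
  have key : s(v,w) = s(v,w') → w = w' := by
    intro hh
    rw [Sym2.eq_iff] at hh
    rcases hh with ⟨-, h2⟩ | ⟨h1, h2⟩
    · exact h2
    · rw [h2, ← h1]
  cases b
  · obtain ⟨h1, -⟩ := C.ET_false.1 h
    obtain ⟨h1', -⟩ := C.ET_false.1 h'
    by_contra hne
    have hee : s(v,w) ≠ s(v,w') := fun hh => hne (key hh)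
    exact C.hM.2 _ h1 _ h1' hee v (Sym2.mem_mk_left _ _) (Sym2.mem_mk_left _ _)
  · obtain ⟨h1, -⟩ := C.ET_true.1 h
    obtain ⟨h1', -⟩ := C.ET_true.1 h'
    by_contra hne
    have hee : s(v,w) ≠ s(v,w') := fun hh => hne (key hh)
    exact C.N_matching.2 _ h1 _ h1' hee v (Sym2.mem_mk_left _ _) (Sym2.mem_mk_left _ _)

theorem ET_mem_Delta {b : Bool} {v w : V} (h : C.ET b v w) : s(v,w) ∈ C.Delta := by
  cases b
  · obtain ⟨h1, h2⟩ := C.ET_false.1 h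
    exact Set.mem_symmDiff.2 (Or.inl ⟨h1, h2⟩)
  · obtain ⟨h1, h2⟩ := C.ET_true.1 h
    exact Set.mem_symmDiff.2 (Or.inr ⟨h1, h2⟩)

theorem ET_not_both {v w v' w' : V} (h : C.ET true v w) (h' : C.ET false v' w')
    (he : s(v,w) = s(v',w')) : False := by
  obtain ⟨h1, h2⟩ := C.ET_true.1 h
  obtain ⟨h1', -⟩ := C.ET_false.1 h'
  rw [he] at h2
  exact h2 h1'

theorem cont_after_false {w z : V} (h : C.ET false w z) : ∃ w', C.ET true z w' := by
  obtain ⟨h1, h2⟩ := C.ET_false.1 h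
  have hzM : Covered C.M z := ⟨_, h1, Sym2.mem_mk_right _ _⟩
  obtain ⟨f, hfN, hzf⟩ := C.cov_M1_N (C.cov_M_M1 hzM)
  obtain ⟨w', rfl⟩ := (Sym2.mem_iff_exists).1 hzf
  refine ⟨w', C.ET_true.2 ⟨hfN, ?_⟩⟩
  intro hfM
  have hne : s(w, z) ≠ s(z, w') := by
    intro hh
    rw [hh] at h2
    exact h2 hfN
  exact C.hM.2 _ h1 _ hfM hne z (Sym2.mem_mk_right _ _) (Sym2.mem_mk_left _ _)

theorem end_free {w z : V} (h : C.ET true w z) (hstop : ∀ w', ¬ C.ET false z w') :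
    ¬ Covered C.M z := by
  rintro ⟨f, hfM, hzf⟩
  obtain ⟨w', rfl⟩ := (Sym2.mem_iff_exists).1 hzf
  have hfN : s(z, w') ∈ C.N := by
    by_contra hfN
    exact hstop w' (C.ET_false.2 ⟨hfM, hfN⟩)
  obtain ⟨h1, h2⟩ := C.ET_true.1 h
  have hne : s(w, z) ≠ s(z, w') := by
    intro hh
    rw [hh] at h2
    exact h2 hfM
  exact C.N_matching.2 _ h1 _ hfN hne z (Sym2.mem_mk_right _ _) (Sym2.mem_mk_left _ _)

/-- arbitrary path of `P` containing `v`, if any. -/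
noncomputable def pathOf (v : V) : List V :=
  if h : ∃ r, r ∈ C.P ∧ v ∈ r then h.choose else []

theorem pathOf_spec {v : V} {r : List V} (hr : r ∈ C.P) (hv : v ∈ r) :
    C.pathOf v = r := by
  have h : ∃ r, r ∈ C.P ∧ v ∈ r := ⟨r, hr, hv⟩
  rw [pathOf, dif_pos h]
  exact path_unique C.hdisj h.choose_spec.1 hr h.choose_spec.2 hv

/-- the finite set of paths in `P` touched by `p`. -/
noncomputable def P0 : Finset (List V) :=
  (C.p.toFinset.filter (fun v => ∃ r, r ∈ C.P ∧ v ∈ r)).image C.pathOf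

theorem mem_P0 {r : List V} : r ∈ C.P0 ↔ r ∈ C.P ∧ ∃ v, v ∈ C.p ∧ v ∈ r := by
  constructor
  · intro h
    rw [P0, Finset.mem_image] at h
    obtain ⟨v, hv, rfl⟩ := h
    rw [Finset.mem_filter, List.mem_toFinset] at hv
    obtain ⟨hvp, r', hr', hvr'⟩ := hv
    rw [C.pathOf_spec hr' hvr']
    exact ⟨hr', v, hvp, hvr'⟩
  · rintro ⟨hr, v, hvp, hvr⟩
    rw [P0, Finset.mem_image]
    refine ⟨v, ?_, C.pathOf_spec hr hvr⟩
    rw [Finset.mem_filter, List.mem_toFinset]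
    exact ⟨hvp, r, hr, hvr⟩

noncomputable def U : Finset V := C.P0.biUnion (fun r => r.toFinset)

noncomputable def R : Finset V := C.p.toFinset ∪ C.U

theorem R_closed {e : Sym2 V} (he : e ∈ C.Delta) {v w : V} (hv : v ∈ e) (hw : w ∈ e)
    (hvR : v ∈ C.R) : w ∈ C.R := by
  rcases C.Delta_sub he with hF | hpe
  · obtain ⟨r, hr, hpe⟩ := hF
    have hvr : v ∈ r := mem_of_mem_pathEdges hpe hv
    have hwr : w ∈ r := mem_of_mem_pathEdges hpe hw
    have hr0 : r ∈ C.P0 := by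
      rw [R, Finset.mem_union] at hvR
      rcases hvR with h | h
      · exact C.mem_P0.2 ⟨hr, v, List.mem_toFinset.1 h, hvr⟩
      · rw [U, Finset.mem_biUnion] at h
        obtain ⟨r', hr', hvr'⟩ := h
        have : r' = r :=
          path_unique C.hdisj (C.mem_P0.1 hr').1 hr (List.mem_toFinset.1 hvr') hvr
        rwa [← this]
    rw [R, Finset.mem_union]
    right
    rw [U, Finset.mem_biUnion]
    exact ⟨r, hr0, List.mem_toFinset.2 hwr⟩
  · rw [R, Finset.mem_union]
    left
    exact List.mem_toFinset.2 (mem_of_mem_pathEdges hpe hw)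

theorem ET_R_closed {b : Bool} {v w : V} (h : C.ET b v w) (hv : v ∈ C.R) : w ∈ C.R :=
  C.R_closed (C.ET_mem_Delta h) (Sym2.mem_mk_left _ _) (Sym2.mem_mk_right _ _) hv

theorem mem_pE {i : ℕ} (hi : i + 1 < C.p.length) :
    s(C.p.get ⟨i, by omega⟩, C.p.get ⟨i+1, hi⟩) ∈ C.pE :=
  ⟨C.p, rfl, mem_pathEdges_iff.2 ⟨i, hi, rfl⟩⟩

theorem even_p_edge_N {i : ℕ} (hi : i + 1 < C.p.length) (hpar : i % 2 = 0) :
    s(C.p.get ⟨i, by omega⟩, C.p.get ⟨i+1, hi⟩) ∈ C.N := by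
  have hnm1 : s(C.p.get ⟨i, by omega⟩, C.p.get ⟨i+1, hi⟩) ∉ C.M1 := by
    intro h
    have := (aug_edge_mem C.hp' hi).1 h
    omega
  exact Set.mem_symmDiff.2 (Or.inr ⟨C.mem_pE hi, hnm1⟩)

theorem v0_step : ∃ w, C.ET true C.v0 w := by
  have h1 : 0 + 1 < C.p.length := by
    have h := C.lenp_ge; have h2 := C.lenp_even; omega
  refine ⟨C.p.get ⟨1, by omega⟩, C.ET_true.2 ⟨C.even_p_edge_N h1 rfl, ?_⟩⟩
  intro hM
  exact C.v0_free_M ⟨_, hM, Sym2.mem_mk_left _ _⟩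

theorem vm_step : ∃ w, C.ET true C.vm w := by
  have hL := C.lenp_ge
  have hLe := C.lenp_even
  have h1 : (C.p.length - 2) + 1 < C.p.length := by omega
  have hvm_eq : C.vm = C.p.get ⟨C.p.length - 2 + 1, h1⟩ := by
    rw [vm]
    exact congrArg C.p.get (Fin.mk_eq_mk.2 (by omega))
  rw [hvm_eq]
  refine ⟨C.p.get ⟨C.p.length - 2, by omega⟩,
    C.ET_symm (C.ET_true.2 ⟨C.even_p_edge_N h1 (by omega), ?_⟩)⟩
  intro hM
  refine C.vm_free_M ⟨_, hM, ?_⟩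
  rw [hvm_eq]
  exact Sym2.mem_mk_right _ _

theorem mem_flipSet_of_M_not_M1 {e : Sym2 V} (heM : e ∈ C.M) (heM1 : e ∉ C.M1) :
    e ∈ flipSet C.P := by
  by_contra h
  exact heM1 (Set.mem_symmDiff.2 (Or.inl ⟨heM, h⟩))

theorem rend_step {r : List V} (hr : r ∈ C.P) {t : ℕ} (ht : t < r.length)
    (hend : t = 0 ∨ t = r.length - 1) : ∃ w, C.ET true (r.get ⟨t, ht⟩) w := by
  have haug := C.hQP r hr
  have hrL := haug.2.2.1
  obtain ⟨e, heM1, heM, hepe, hze⟩ := flip_covers C.hQP hr ht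
  by_cases hpEe : e ∈ C.pE
  · obtain ⟨q, hq, hepe'⟩ := hpEe
    rcases hq with rfl
    have hzp : r.get ⟨t, ht⟩ ∈ C.p := mem_of_mem_pathEdges hepe' hze
    obtain ⟨⟨j, hj⟩, hzj⟩ := List.mem_iff_get.1 hzp
    have hj0 : j ≠ 0 := by
      intro h
      subst h
      apply C.v0_notin_path hr
      have : C.v0 = r.get ⟨t, ht⟩ := hzj
      rw [this]
      exact List.get_mem _ _
    have hjm : j ≠ C.p.length - 1 := by
      intro h
      subst h
      apply C.vm_notin_path hr
      have : C.vm = r.get ⟨t, ht⟩ := hzj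
      rw [this]
      exact List.get_mem _ _
    have h0 : 0 < j := by omega
    have h1 : j + 1 < C.p.length := by omega
    have hze' : C.p.get ⟨j, by omega⟩ ∈ e := by rw [hzj]; exact hze
    obtain ⟨k, hk, heq, hjor⟩ :=
      aug_interior_M_edge C.M1_matching C.hp' h0 h1 heM1 hze'
    have hkodd : k % 2 = 1 := by
      rw [heq] at heM1
      exact (aug_edge_mem C.hp' hk).1 heM1
    -- helper establishing the result from an adjacent even edge at position j
    have main : ∀ i : ℕ, ∀ hi : i + 1 < C.p.length, i % 2 = 0 →
        (j = i ∨ j = i + 1) → ∃ w, C.ET true (r.get ⟨t, ht⟩) w := by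
      intro i hi hieven hji
      have heN : s(C.p.get ⟨i, by omega⟩, C.p.get ⟨i+1, hi⟩) ∈ C.N :=
        C.even_p_edge_N hi hieven
      have heM' : s(C.p.get ⟨i, by omega⟩, C.p.get ⟨i+1, hi⟩) ∉ C.M := by
        intro hMm
        have hnM1 : s(C.p.get ⟨i, by omega⟩, C.p.get ⟨i+1, hi⟩) ∉ C.M1 := by
          intro h
          have := (aug_edge_mem C.hp' hi).1 h
          omega
        obtain ⟨r', hr', hpe''⟩ := C.mem_flipSet_of_M_not_M1 hMm hnM1
        have hzr' : r.get ⟨t, ht⟩ ∈ r' := by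
          apply mem_of_mem_pathEdges hpe''
          rcases hji with rfl | rfl
          · rw [← hzj]; exact Sym2.mem_mk_left _ _
          · rw [← hzj]; exact Sym2.mem_mk_right _ _
        have hzr : r.get ⟨t, ht⟩ ∈ r := List.get_mem _ _
        obtain rfl : r' = r := path_unique C.hdisj hr' hr hzr' hzr
        refine endpoint_edge_not_mem haug hpe'' ?_ hMm
        rcases hend with rfl | rfl
        · left
          rcases hji with rfl | rfl
          · rw [← hzj]; exact Sym2.mem_mk_left _ _
          · rw [← hzj]; exact Sym2.mem_mk_right _ _
        · right
          rcases hji with rfl | rfl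
          · rw [← hzj]; exact Sym2.mem_mk_left _ _
          · rw [← hzj]; exact Sym2.mem_mk_right _ _
      rcases hji with rfl | rfl
      · exact ⟨C.p.get ⟨j+1, hi⟩, C.ET_true.2 ⟨by rw [hzj] at heN; exact heN,
          by rw [hzj] at heM'; exact heM'⟩⟩
      · refine ⟨C.p.get ⟨i, by omega⟩, C.ET_symm (C.ET_true.2 ⟨?_, ?_⟩)⟩
        · rw [hzj] at heN; exact heN
        · rw [hzj] at heM'; exact heM'
    rcases hjor with hjk | hjk
    · -- j = k, use edge j - 1
      have hi : (j - 1) + 1 < C.p.length := by omega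
      apply main (j-1) hi (by omega)
      right; omega
    · -- j = k + 1, use edge j
      apply main j (by omega) (by omega)
      left; rfl
  · have heN : e ∈ C.N := Set.mem_symmDiff.2 (Or.inl ⟨heM1, hpEe⟩)
    obtain ⟨w, rfl⟩ := (Sym2.mem_iff_exists).1 hze
    exact ⟨w, C.ET_true.2 ⟨heN, heM⟩⟩

/-- the two endpoints of a path, as a finset. -/
noncomputable def rends (r : List V) : Finset V :=
  if h : 2 ≤ r.length then {r.get ⟨0, by omega⟩, r.get ⟨r.length - 1, by omega⟩} else ∅

theorem mem_rends {r : List V} (h : 2 ≤ r.length) {x : V} :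
    x ∈ rends r ↔ (x = r.get ⟨0, by omega⟩ ∨ x = r.get ⟨r.length - 1, by omega⟩) := by
  rw [rends, dif_pos h]
  simp

noncomputable def S : Finset V := {C.v0, C.vm} ∪ C.P0.biUnion (fun r => rends r)

theorem P0_len {r : List V} (hr : r ∈ C.P0) : r.length = 2 * C.K + 2 :=
  (C.hP r (C.mem_P0.1 hr).1).2

theorem S_spec {x : V} (hx : x ∈ C.S) :
    (¬ Covered C.M x) ∧ x ∈ C.R ∧ (∃ w, C.ET true x w) := by
  rw [S, Finset.mem_union, Finset.mem_insert, Finset.mem_singleton] at hx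
  rcases hx with (rfl | rfl) | hx
  · refine ⟨C.v0_free_M, ?_, C.v0_step⟩
    rw [R, Finset.mem_union]
    left
    exact List.mem_toFinset.2 (List.get_mem _ _)
  · refine ⟨C.vm_free_M, ?_, C.vm_step⟩
    rw [R, Finset.mem_union]
    left
    exact List.mem_toFinset.2 (List.get_mem _ _)
  · rw [Finset.mem_biUnion] at hx
    obtain ⟨r, hr0, hxr⟩ := hx
    have hrP := (C.mem_P0.1 hr0).1
    have hK := C.hK
    have hrL : 2 ≤ r.length := by rw [C.P0_len hr0]; omega
    have hxR : x ∈ rends r → x ∈ C.R := by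
      intro hxx
      rw [R, Finset.mem_union]
      right
      rw [U, Finset.mem_biUnion]
      refine ⟨r, hr0, List.mem_toFinset.2 ?_⟩
      rcases (mem_rends hrL).1 hxx with rfl | rfl <;> exact List.get_mem _ _
    rcases (mem_rends hrL).1 hxr with rfl | rfl
    · exact ⟨aug_head_free (C.hQP r hrP), hxR hxr,
        C.rend_step hrP (by omega) (Or.inl rfl)⟩
    · exact ⟨aug_last_free (C.hQP r hrP), hxR hxr,
        C.rend_step hrP (by omega) (Or.inr rfl)⟩

def typeAt (b : Bool) (i : ℕ) : Bool := if i % 2 = 0 then b else !b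

theorem typeAt_zero (b : Bool) : typeAt b 0 = b := rfl

theorem typeAt_succ (b : Bool) (i : ℕ) : typeAt b (i+1) = typeAt (!b) i := by
  rcases Nat.mod_two_eq_zero_or_one i with h | h
  · have h2 : (i+1) % 2 = 1 := by omega
    simp [typeAt, h, h2]
  · have h2 : (i+1) % 2 = 0 := by omega
    simp [typeAt, h, h2]

noncomputable def step (b : Bool) (v : V) : Option V :=
  if h : ∃ w, C.ET b v w then some h.choose else none

theorem step_some {b : Bool} {v w : V} : C.step b v = some w ↔ C.ET b v w := by
  constructor
  · intro h
    by_cases hex : ∃ w, C.ET b v w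
    · rw [step, dif_pos hex] at h
      have : hex.choose = w := Option.some.inj h
      rw [← this]
      exact hex.choose_spec
    · rw [step, dif_neg hex] at h
      simp at h
  · intro h
    have hex : ∃ w, C.ET b v w := ⟨w, h⟩
    rw [step, dif_pos hex]
    exact congrArg some (C.ET_unique hex.choose_spec h)

theorem step_none {b : Bool} {v : V} : C.step b v = none ↔ ∀ w, ¬ C.ET b v w := by
  rw [step]
  split_ifs with hex
  · simp only [reduceCtorEq, false_iff]
    push_neg
    exact hex
  · simp only [true_iff]
    push_neg at hex
    exact hex

noncomputable def fwalk (C : HK V) : ℕ → V → Bool → List V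
  | 0, v, _ => [v]
  | (n+1), v, b =>
      match C.step b v with
      | none => [v]
      | some w => v :: fwalk C n w (!b)

theorem fwalk_zero (v : V) (b : Bool) : C.fwalk 0 v b = [v] := rfl

theorem fwalk_succ_none {n : ℕ} {v : V} {b : Bool} (h : C.step b v = none) :
    C.fwalk (n+1) v b = [v] := by
  rw [fwalk, h]

theorem fwalk_succ_some {n : ℕ} {v w : V} {b : Bool} (h : C.step b v = some w) :
    C.fwalk (n+1) v b = v :: C.fwalk n w (!b) := by
  rw [fwalk, h]

theorem fwalk_cons (n : ℕ) (v : V) (b : Bool) : ∃ t, C.fwalk n v b = v :: t := by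
  cases n with
  | zero => exact ⟨[], rfl⟩
  | succ n =>
    cases h : C.step b v with
    | none => exact ⟨[], C.fwalk_succ_none h⟩
    | some w => exact ⟨_, C.fwalk_succ_some h⟩

theorem fwalk_ne_nil (n : ℕ) (v : V) (b : Bool) : C.fwalk n v b ≠ [] := by
  obtain ⟨t, ht⟩ := C.fwalk_cons n v b
  rw [ht]
  exact List.cons_ne_nil _ _

theorem fwalk_length_pos (n : ℕ) (v : V) (b : Bool) : 0 < (C.fwalk n v b).length :=
  List.length_pos_iff.2 (C.fwalk_ne_nil n v b)

theorem fwalk_length_le : ∀ (n : ℕ) (v : V) (b : Bool), (C.fwalk n v b).length ≤ n + 1 := by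
  intro n
  induction n with
  | zero => intro v b; rw [fwalk_zero]; simp
  | succ n ih =>
    intro v b
    cases h : C.step b v with
    | none => rw [C.fwalk_succ_none h]; simp
    | some w =>
      rw [C.fwalk_succ_some h]
      simp only [List.length_cons]
      have := ih w (!b)
      omega

theorem fwalk_get?_zero (n : ℕ) (v : V) (b : Bool) : (C.fwalk n v b)[0]? = some v := by
  obtain ⟨t, ht⟩ := C.fwalk_cons n v b
  rw [ht]
  simp

theorem fwalk_types : ∀ {n : ℕ} {v : V} {b : Bool} (i : ℕ) (x y : V),
    (C.fwalk n v b)[i]? = some x → (C.fwalk n v b)[i+1]? = some y →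
    C.ET (typeAt b i) x y := by
  intro n
  induction n with
  | zero =>
    intro v b i x y h1 h2
    rw [fwalk_zero] at h2
    rcases i with _ | i <;> simp at h2
  | succ n ih =>
    intro v b i x y h1 h2
    cases hs : C.step b v with
    | none =>
      rw [C.fwalk_succ_none hs] at h2
      rcases i with _ | i <;> simp at h2
    | some w =>
      rw [C.fwalk_succ_some hs] at h1 h2
      cases i with
      | zero =>
        have hx : x = v := by
          have : v = x := by simpa using h1
          exact this.symm
        rw [List.getElem?_cons_succ] at h2
        have hy : y = w := by
          have h0 := C.fwalk_get?_zero n w (!b)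
          rw [h0] at h2
          exact (Option.some.inj h2).symm
        rw [hx, hy, typeAt_zero]
        exact C.step_some.1 hs
      | succ i =>
        rw [List.getElem?_cons_succ] at h1 h2
        rw [typeAt_succ]
        exact ih i x y h1 h2

theorem fwalk_sub_R {n : ℕ} {v : V} {b : Bool} (hv : v ∈ C.R) :
    ∀ u ∈ C.fwalk n v b, u ∈ C.R := by
  induction n generalizing v b with
  | zero =>
    intro u hu
    rw [fwalk_zero, List.mem_singleton] at hu
    rwa [hu]
  | succ n ih =>
    intro u hu
    cases hs : C.step b v with
    | none =>
      rw [C.fwalk_succ_none hs, List.mem_singleton] at hu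
      rwa [hu]
    | some w =>
      rw [C.fwalk_succ_some hs, List.mem_cons] at hu
      rcases hu with rfl | hu
      · exact hv
      · exact ih (C.ET_R_closed (C.step_some.1 hs) hv) u hu

def Done (n : ℕ) (v : V) (b : Bool) : Prop := C.fwalk (n+1) v b = C.fwalk n v b

theorem done_of_length_le : ∀ {n : ℕ} {v : V} {b : Bool},
    (C.fwalk n v b).length ≤ n → C.Done n v b := by
  intro n
  induction n with
  | zero =>
    intro v b h
    rw [fwalk_zero] at h
    simp at h
  | succ n ih =>
    intro v b h
    cases hs : C.step b v with
    | none =>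
      show C.fwalk (n+1+1) v b = C.fwalk (n+1) v b
      rw [C.fwalk_succ_none hs, C.fwalk_succ_none hs]
    | some w =>
      rw [C.fwalk_succ_some hs] at h
      simp only [List.length_cons] at h
      have hd : C.Done n w (!b) := ih (by omega)
      show C.fwalk (n+1+1) v b = C.fwalk (n+1) v b
      rw [C.fwalk_succ_some hs, C.fwalk_succ_some hs]
      rw [show C.fwalk (n+1) w (!b) = C.fwalk n w (!b) from hd]

theorem done_mono : ∀ {n : ℕ} {v : V} {b : Bool}, C.Done n v b → C.Done (n+1) v b := by
  intro n
  induction n with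
  | zero =>
    intro v b h
    cases hs : C.step b v with
    | none =>
      show C.fwalk 2 v b = C.fwalk 1 v b
      rw [C.fwalk_succ_none hs, C.fwalk_succ_none hs]
    | some w =>
      have h' : C.fwalk 1 v b = C.fwalk 0 v b := h
      rw [C.fwalk_succ_some hs] at h'
      have hlen := congrArg List.length h'
      simp [fwalk_zero] at hlen
  | succ n ih =>
    intro v b h
    cases hs : C.step b v with
    | none =>
      show C.fwalk (n+3) v b = C.fwalk (n+2) v b
      rw [C.fwalk_succ_none hs, C.fwalk_succ_none hs]
    | some w =>
      have h' : C.fwalk (n+2) v b = C.fwalk (n+1) v b := h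
      rw [C.fwalk_succ_some hs, C.fwalk_succ_some hs] at h'
      have hd : C.Done n w (!b) := List.cons.inj h' |>.2
      have hd2 := ih hd
      show C.fwalk (n+3) v b = C.fwalk (n+2) v b
      rw [C.fwalk_succ_some hs, C.fwalk_succ_some hs]
      rw [show C.fwalk (n+2) w (!b) = C.fwalk (n+1) w (!b) from hd2]

theorem fwalk_eq_of_done {n : ℕ} {v : V} {b : Bool} (h : C.Done n v b) :
    ∀ m, n ≤ m → C.fwalk m v b = C.fwalk n v b := by
  intro m hm
  induction m, hm using Nat.le_induction with
  | base => rfl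
  | succ m hm ih =>
    have hd : C.Done m v b := by
      clear ih
      induction m, hm using Nat.le_induction with
      | base => exact h
      | succ m hm ih => exact C.done_mono ih
    have hd' : C.fwalk (m+1) v b = C.fwalk m v b := hd
    rw [hd', ih]

theorem fwalk_last_stop : ∀ {n : ℕ} {v : V} {b : Bool}, C.Done n v b →
    ∀ z, (C.fwalk n v b)[(C.fwalk n v b).length - 1]? = some z →
    C.step (typeAt b ((C.fwalk n v b).length - 1)) z = none := by
  intro n
  induction n with
  | zero =>
    intro v b h z hz
    cases hs : C.step b v with
    | none =>
      rw [fwalk_zero] at hz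
      have hzv : v = z := by simpa using hz
      subst hzv
      rw [fwalk_zero]
      have h0 : ([v] : List V).length - 1 = 0 := rfl
      rw [h0, typeAt_zero]
      exact hs
    | some w =>
      have h' : C.fwalk 1 v b = C.fwalk 0 v b := h
      rw [C.fwalk_succ_some hs] at h'
      have hlen := congrArg List.length h'
      simp [fwalk_zero] at hlen
  | succ n ih =>
    intro v b h z hz
    cases hs : C.step b v with
    | none =>
      rw [C.fwalk_succ_none hs] at hz ⊢
      have hzv : v = z := by simpa using hz
      subst hzv
      have h0 : ([v] : List V).length - 1 = 0 := rfl
      rw [h0, typeAt_zero]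
      exact hs
    | some w =>
      have h' : C.fwalk (n+2) v b = C.fwalk (n+1) v b := h
      rw [C.fwalk_succ_some hs, C.fwalk_succ_some hs] at h'
      have hd : C.Done n w (!b) := List.cons.inj h' |>.2
      rw [C.fwalk_succ_some hs] at hz ⊢
      simp only [List.length_cons] at hz ⊢
      have hL : 0 < (C.fwalk n w (!b)).length := C.fwalk_length_pos n w (!b)
      have he1 : (C.fwalk n w (!b)).length + 1 - 1 = ((C.fwalk n w (!b)).length - 1) + 1 := by
        omega
      rw [he1] at hz ⊢
      rw [List.getElem?_cons_succ] at hz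
      rw [typeAt_succ]
      exact ih hd z hz

theorem fwalk_drop : ∀ {n : ℕ} {v : V} {b : Bool} (i : ℕ) (x : V),
    (C.fwalk n v b)[i]? = some x →
    (C.fwalk n v b).drop i = C.fwalk (n - i) x (typeAt b i) := by
  intro n
  induction n with
  | zero =>
    intro v b i x hx
    rw [fwalk_zero] at hx ⊢
    cases i with
    | zero =>
      have hxv : v = x := by simpa using hx
      subst hxv
      rw [typeAt_zero, fwalk_zero]
      rfl
    | succ i => simp at hx
  | succ n ih =>
    intro v b i x hx
    cases hs : C.step b v with
    | none =>
      rw [C.fwalk_succ_none hs] at hx ⊢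
      cases i with
      | zero =>
        have hxv : v = x := by simpa using hx
        subst hxv
        rw [typeAt_zero]
        simp only [Nat.sub_zero, List.drop_zero]
        rw [C.fwalk_succ_none hs]
      | succ i => simp at hx
    | some w =>
      cases i with
      | zero =>
        rw [C.fwalk_succ_some hs] at hx
        have hxv : v = x := by simpa using hx
        subst hxv
        rw [typeAt_zero]
        simp only [Nat.sub_zero, List.drop_zero]
      | succ i =>
        rw [C.fwalk_succ_some hs] at hx ⊢
        rw [List.getElem?_cons_succ] at hx
        rw [typeAt_succ]
        have : n + 1 - (i + 1) = n - i := by omega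
        rw [this, List.drop_succ_cons]
        exact ih i x hx

theorem done_drop {n : ℕ} {v : V} {b : Bool} (hd : C.Done n v b) (i : ℕ) (x : V)
    (hx : (C.fwalk n v b)[i]? = some x) :
    C.Done (n - i) x (typeAt b i) := by
  have hiL : i < (C.fwalk n v b).length := by
    by_contra hcon
    rw [List.getElem?_eq_none (by omega)] at hx
    simp at hx
  have hin : i ≤ n := by
    have := C.fwalk_length_le n v b
    omega
  have h1 : (C.fwalk (n+1) v b).drop i = C.fwalk (n + 1 - i) x (typeAt b i) := by
    apply C.fwalk_drop
    have hd' : C.fwalk (n+1) v b = C.fwalk n v b := hd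
    rw [hd']
    exact hx
  have h2 : (C.fwalk n v b).drop i = C.fwalk (n - i) x (typeAt b i) :=
    C.fwalk_drop i x hx
  have hd' : C.fwalk (n+1) v b = C.fwalk n v b := hd
  rw [hd'] at h1
  have : C.fwalk (n + 1 - i) x (typeAt b i) = C.fwalk (n - i) x (typeAt b i) := by
    rw [← h1, ← h2]
  show C.fwalk (n - i + 1) x (typeAt b i) = C.fwalk (n - i) x (typeAt b i)
  rw [show n - i + 1 = n + 1 - i by omega]
  exact this

theorem typeAt_congr {a b : ℕ} (b0 : Bool) (h : a % 2 = b % 2) :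
    typeAt b0 a = typeAt b0 b := by
  unfold typeAt
  rw [h]

theorem fwalk_get_types {n : ℕ} {v : V} {b : Bool} (i : ℕ)
    (h : i + 1 < (C.fwalk n v b).length) :
    C.ET (typeAt b i) ((C.fwalk n v b).get ⟨i, Nat.lt_of_succ_lt h⟩)
      ((C.fwalk n v b).get ⟨i+1, h⟩) := by
  apply C.fwalk_types i
  · rw [List.getElem?_eq_getElem (Nat.lt_of_succ_lt h), List.get_eq_getElem]
  · rw [List.getElem?_eq_getElem h, List.get_eq_getElem]

/-- a forced alternating walk starting at an `M`-free vertex has no duplicates. -/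
theorem alt_nodup (l : List V)
    (types' : ∀ (i : ℕ) (h : i + 1 < l.length),
      C.ET (typeAt true i) (l.get ⟨i, Nat.lt_of_succ_lt h⟩) (l.get ⟨i+1, h⟩))
    (hx0 : ∀ h0 : 0 < l.length, ¬ Covered C.M (l.get ⟨0, h0⟩)) : l.Nodup := by
  classical
  have getcast : ∀ (a b : ℕ) (ha : a < l.length) (hb : b < l.length), a = b →
      l.get ⟨a, ha⟩ = l.get ⟨b, hb⟩ := by
    intro a b ha hb h
    subst h
    rfl
  by_contra hnd
  have hninj : ¬ Function.Injective l.get := fun h => hnd (List.nodup_iff_injective_get.2 h)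
  rw [Function.not_injective_iff] at hninj
  obtain ⟨a, b, hab, hne⟩ := hninj
  have hQ : ∃ j : ℕ, ∃ hj : j < l.length, ∃ i : ℕ, ∃ hi : i < l.length,
      i < j ∧ l.get ⟨i, hi⟩ = l.get ⟨j, hj⟩ := by
    rcases lt_or_gt_of_ne (fun h : a = b => hne h) with h | h
    · exact ⟨b, b.isLt, a, a.isLt, h, hab⟩
    · exact ⟨a, a.isLt, b, b.isLt, h, hab.symm⟩
  obtain ⟨hj, i, hi, hij, heq⟩ := Nat.find_spec hQ
  set j := Nat.find hQ with hjdef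
  have hmin : ∀ j' : ℕ, j' < j → ¬ (∃ hj : j' < l.length, ∃ i : ℕ, ∃ hi : i < l.length,
      i < j' ∧ l.get ⟨i, hi⟩ = l.get ⟨j', hj⟩) := fun j' h => Nat.find_min hQ h
  -- adjacent repeat is impossible
  have hadj : i + 1 ≠ j := by
    intro h
    have h2 : l.get ⟨j, hj⟩ = l.get ⟨i+1, by omega⟩ := getcast j (i+1) hj (by omega) h.symm
    exact C.ET_ne (types' i (by omega)) (heq.trans h2)
  have hij1 : i + 1 < j := by omega
  -- the arrival edge at position j
  have hj1 : (j - 1) + 1 < l.length := by omega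
  have E3 : C.ET (typeAt true (j-1)) (l.get ⟨j-1, by omega⟩) (l.get ⟨i, hi⟩) := by
    have h3 := types' (j-1) hj1
    rwa [getcast ((j-1)+1) j hj1 hj (by omega), ← heq] at h3
  rcases Nat.eq_zero_or_pos i with rfl | hipos
  · rcases Nat.mod_two_eq_zero_or_one (j - 1) with hpar | hpar
    · -- arrival of type true: coincides with the initial edge
      have htype : typeAt true (j-1) = true := by unfold typeAt; rw [hpar]; rfl
      rw [htype] at E3
      have h1len : 0 + 1 < l.length := by omega
      have E0 : C.ET true (l.get ⟨0, hi⟩) (l.get ⟨1, by omega⟩) := types' 0 h1len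
      have huniq : l.get ⟨1, by omega⟩ = l.get ⟨j-1, by omega⟩ :=
        C.ET_unique E0 (C.ET_symm E3)
      have hj12 : 1 < j - 1 := by omega
      exact hmin (j-1) (by omega) ⟨by omega, 1, by omega, hj12, huniq⟩
    · -- arrival of type false: an M-edge at the free start
      have htype : typeAt true (j-1) = false := by unfold typeAt; rw [hpar]; simp
      rw [htype] at E3
      obtain ⟨hMm, -⟩ := C.ET_false.1 E3
      exact hx0 (by omega) ⟨_, hMm, Sym2.mem_mk_right _ _⟩
  · -- repeat of an interior vertex
    have hi1 : (i - 1) + 1 < l.length := by omega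
    have E1 : C.ET (typeAt true (i-1)) (l.get ⟨i-1, by omega⟩) (l.get ⟨i, hi⟩) := by
      have h1 := types' (i-1) hi1
      rwa [getcast ((i-1)+1) i hi1 hi (by omega)] at h1
    have hi2 : i + 1 < l.length := by omega
    have E2 : C.ET (typeAt true i) (l.get ⟨i, hi⟩) (l.get ⟨i+1, hi2⟩) :=
      types' i hi2
    rcases (by omega : (j - 1) % 2 = (i - 1) % 2 ∨ (j - 1) % 2 = i % 2) with hp2 | hp2
    · rw [typeAt_congr true hp2] at E3
      have huniq : l.get ⟨j-1, by omega⟩ = l.get ⟨i-1, by omega⟩ :=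
        C.ET_unique (C.ET_symm E3) (C.ET_symm E1)
      have hlt : i - 1 < j - 1 := by omega
      exact hmin (j-1) (by omega) ⟨by omega, i-1, by omega, hlt, huniq.symm⟩
    · rw [typeAt_congr true hp2] at E3
      have huniq : l.get ⟨j-1, by omega⟩ = l.get ⟨i+1, hi2⟩ :=
        C.ET_unique (C.ET_symm E3) E2
      have hne2 : i + 1 ≠ j - 1 := by omega
      have hlt : i + 1 < j - 1 := by omega
      exact hmin (j-1) (by omega) ⟨by omega, i+1, by omega, hlt, huniq.symm⟩

theorem fwalk_nodup {x : V} (hfree : ¬ Covered C.M x) (n : ℕ) :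
    (C.fwalk n x true).Nodup := by
  apply C.alt_nodup
  · intro i h
    exact C.fwalk_get_types i h
  · intro h0
    have h := C.fwalk_get?_zero n x true
    rw [List.getElem?_eq_getElem h0] at h
    have h2 : (C.fwalk n x true).get ⟨0, h0⟩ = x := by
      rw [List.get_eq_getElem]
      exact Option.some.inj h
    rwa [h2]

theorem fwalk_get_types' {n : ℕ} {v : V} {b : Bool} (i k : ℕ) (hik : i + 1 = k)
    (hk : k < (C.fwalk n v b).length) :
    C.ET (typeAt b i) ((C.fwalk n v b).get ⟨i, by omega⟩)
      ((C.fwalk n v b).get ⟨k, hk⟩) := by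
  have h := C.fwalk_get_types i (show i + 1 < (C.fwalk n v b).length by omega)
  rw [show (⟨i+1, by omega⟩ : Fin (C.fwalk n v b).length) = ⟨k, hk⟩ from
    Fin.mk_eq_mk.2 hik] at h
  exact h

noncomputable def WK (x : V) : List V := C.fwalk C.R.card x true

theorem WK_def (x : V) : C.WK x = C.fwalk C.R.card x true := rfl

theorem wk_nodup {x : V} (hfree : ¬ Covered C.M x) : (C.WK x).Nodup :=
  C.fwalk_nodup hfree _

theorem wk_sub_R {x : V} (hxR : x ∈ C.R) : ∀ u ∈ C.WK x, u ∈ C.R :=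
  C.fwalk_sub_R hxR

theorem wk_done {x : V} (hfree : ¬ Covered C.M x) (hxR : x ∈ C.R) :
    C.Done C.R.card x true := by
  apply C.done_of_length_le
  have h1 : (C.fwalk C.R.card x true).toFinset.card = (C.fwalk C.R.card x true).length :=
    List.toFinset_card_of_nodup (C.fwalk_nodup hfree _)
  have h2 : (C.fwalk C.R.card x true).toFinset ⊆ C.R := by
    intro u hu
    exact C.fwalk_sub_R hxR u (List.mem_toFinset.1 hu)
  have := Finset.card_le_card h2
  omega

theorem wk_get_zero {x : V} (h0 : 0 < (C.WK x).length) : (C.WK x).get ⟨0, h0⟩ = x := by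
  have h := C.fwalk_get?_zero C.R.card x true
  rw [← WK_def] at h
  rw [List.getElem?_eq_getElem h0] at h
  rw [List.get_eq_getElem]
  exact Option.some.inj h

theorem wk_len_ge2 {x : V} (hxR : x ∈ C.R) (hstep : ∃ w, C.ET true x w) :
    2 ≤ (C.WK x).length := by
  obtain ⟨w, hw⟩ := hstep
  have hcard : 0 < C.R.card := Finset.card_pos.2 ⟨x, hxR⟩
  obtain ⟨m, hm⟩ : ∃ m, C.R.card = m + 1 := ⟨C.R.card - 1, by omega⟩
  have hs : C.step true x = some w := C.step_some.2 hw
  rw [WK, hm, C.fwalk_succ_some hs]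
  have := C.fwalk_length_pos m w (!true)
  simp only [List.length_cons]
  omega

theorem wk_stop {x : V} (hfree : ¬ Covered C.M x) (hxR : x ∈ C.R) :
    ∀ z, (C.WK x)[(C.WK x).length - 1]? = some z →
    C.step (typeAt true ((C.WK x).length - 1)) z = none :=
  C.fwalk_last_stop (C.wk_done hfree hxR)

theorem wk_types' {x : V} (i k : ℕ) (hik : i + 1 = k) (hk : k < (C.WK x).length) :
    C.ET (typeAt true i) ((C.WK x).get ⟨i, by omega⟩) ((C.WK x).get ⟨k, hk⟩) :=
  C.fwalk_get_types' i k hik hk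

theorem wk_even {x : V} (hfree : ¬ Covered C.M x) (hxR : x ∈ C.R)
    (hstep : ∃ w, C.ET true x w) : (C.WK x).length % 2 = 0 := by
  by_contra hodd
  have hL2 := C.wk_len_ge2 hxR hstep
  have hL3 : 3 ≤ (C.WK x).length := by omega
  have hz : (C.WK x)[(C.WK x).length - 1]? =
      some ((C.WK x).get ⟨(C.WK x).length - 1, by omega⟩) := by
    rw [List.getElem?_eq_getElem (by omega), List.get_eq_getElem]
  have hstop := C.wk_stop hfree hxR _ hz
  have harr := C.wk_types' (x := x) ((C.WK x).length - 2) ((C.WK x).length - 1)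
    (by omega) (by omega)
  have hty : typeAt true ((C.WK x).length - 2) = false := by
    unfold typeAt
    rw [show ((C.WK x).length - 2) % 2 = 1 by omega]
    rfl
  rw [hty] at harr
  obtain ⟨w', hw'⟩ := C.cont_after_false harr
  have htyL : typeAt true ((C.WK x).length - 1) = true := by
    unfold typeAt
    rw [show ((C.WK x).length - 1) % 2 = 0 by omega]
    rfl
  rw [htyL] at hstop
  exact (C.step_none.1 hstop) w' hw'

theorem wk_aug {x : V} (hfree : ¬ Covered C.M x) (hxR : x ∈ C.R)
    (hstep : ∃ w, C.ET true x w) : IsAugPath C.G C.M (C.WK x) := by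
  have hnd := C.wk_nodup hfree
  have hL2 := C.wk_len_ge2 hxR hstep
  have heven := C.wk_even hfree hxR hstep
  refine ⟨hnd, ?_, hL2, heven, ?_, ?_⟩
  · rw [List.Chain', List.isChain_iff_getElem]
    intro i h
    exact C.ET_adj (C.wk_types' i (i+1) rfl (by omega))
  · intro i h
    rw [pathEdges_get]
    have hi1 : i + 1 < (C.WK x).length := by
      rw [pathEdges_length] at h
      omega
    have het := C.wk_types' (x := x) i (i+1) rfl hi1
    rcases Nat.mod_two_eq_zero_or_one i with hpar | hpar
    · have hty : typeAt true i = true := by unfold typeAt; rw [hpar]; rfl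
      rw [hty] at het
      obtain ⟨-, hnm⟩ := C.ET_true.1 het
      exact ⟨fun hmem => absurd hmem hnm, fun hcon => absurd hcon (by omega)⟩
    · have hty : typeAt true i = false := by unfold typeAt; rw [hpar]; rfl
      rw [hty] at het
      obtain ⟨hm, -⟩ := C.ET_false.1 het
      exact ⟨fun _ => hpar, fun _ => hm⟩
  · intro v hv
    rcases hv with hv | hv
    · rw [head?_get' (by omega)] at hv
      have hveq := Option.some.inj hv
      rw [← hveq, C.wk_get_zero]
      exact hfree
    · rw [getLast?_get' (by omega)] at hv
      have hveq := Option.some.inj hv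
      rw [← hveq]
      have harr := C.wk_types' (x := x) ((C.WK x).length - 2) ((C.WK x).length - 1)
        (by omega) (by omega)
      have hty : typeAt true ((C.WK x).length - 2) = true := by
        unfold typeAt
        rw [show ((C.WK x).length - 2) % 2 = 0 by omega]
        rfl
      rw [hty] at harr
      apply C.end_free harr
      intro w' hw'
      have hz : (C.WK x)[(C.WK x).length - 1]? =
          some ((C.WK x).get ⟨(C.WK x).length - 1, by omega⟩) := by
        rw [List.getElem?_eq_getElem (by omega), List.get_eq_getElem]
      have hstop := C.wk_stop hfree hxR _ hz
      have htyL : typeAt true ((C.WK x).length - 1) = false := by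
        unfold typeAt
        rw [show ((C.WK x).length - 1) % 2 = 1 by omega]
        rfl
      rw [htyL] at hstop
      exact (C.step_none.1 hstop) w' hw'

theorem wk_long {x : V} (hfree : ¬ Covered C.M x) (hxR : x ∈ C.R)
    (hstep : ∃ w, C.ET true x w) : 2 * C.K + 2 ≤ (C.WK x).length := by
  have haug := C.wk_aug hfree hxR hstep
  have heven := C.wk_even hfree hxR hstep
  have := C.hno _ haug
  by_contra hcon
  exact this (by omega)

theorem WK_ne_nil (x : V) : C.WK x ≠ [] := C.fwalk_ne_nil _ _ _

noncomputable def gval (v : V) (c : Bool) : V :=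
  if h : ∃ m, C.Done m v c then (C.fwalk h.choose v c).getLast (C.fwalk_ne_nil _ _ _) else v

theorem gval_eq {m : ℕ} {v : V} {c : Bool} (hd : C.Done m v c) :
    (C.fwalk m v c).getLast (C.fwalk_ne_nil _ _ _) = C.gval v c := by
  have hex : ∃ m, C.Done m v c := ⟨m, hd⟩
  rw [gval, dif_pos hex]
  have h1 := C.fwalk_eq_of_done hd (max m hex.choose) (le_max_left _ _)
  have h2 := C.fwalk_eq_of_done hex.choose_spec (max m hex.choose) (le_max_right _ _)
  have heq : C.fwalk m v c = C.fwalk hex.choose v c := by rw [← h1, ← h2]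
  have h3 := congrArg List.getLast? heq
  rw [List.getLast?_eq_getLast (C.fwalk_ne_nil _ _ _),
    List.getLast?_eq_getLast (C.fwalk_ne_nil _ _ _)] at h3
  exact Option.some.inj h3

theorem getLast_drop'' {α : Type*} (l : List α) (i : ℕ) (hi : i < l.length)
    (h1 : l.drop i ≠ []) (h2 : l ≠ []) : (l.drop i).getLast h1 = l.getLast h2 := by
  rw [List.getLast_eq_getElem, List.getLast_eq_getElem, List.getElem_drop]
  congr 1
  rw [List.length_drop]
  omega

theorem wk_through {x : V} (hfree : ¬ Covered C.M x) (hxR : x ∈ C.R) {v : V}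
    (hv : v ∈ C.WK x) :
    ∃ c : Bool, (C.WK x).getLast (C.WK_ne_nil x) = C.gval v c := by
  obtain ⟨⟨i, hi⟩, rfl⟩ := List.mem_iff_get.1 hv
  refine ⟨typeAt true i, ?_⟩
  have hx : (C.fwalk C.R.card x true)[i]? = some ((C.WK x).get ⟨i, hi⟩) := by
    rw [← WK_def, List.getElem?_eq_getElem hi, List.get_eq_getElem]
  have hdrop := C.fwalk_drop i _ hx
  have hdone := C.done_drop (C.wk_done hfree hxR) i _ hx
  rw [← C.gval_eq hdone]
  have hdropne : List.drop i (C.fwalk C.R.card x true) ≠ [] := by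
    rw [hdrop]
    exact C.fwalk_ne_nil _ _ _
  have h4 := congrArg List.getLast? hdrop
  rw [List.getLast?_eq_getLast hdropne,
    List.getLast?_eq_getLast (C.fwalk_ne_nil _ _ _)] at h4
  have h5 := Option.some.inj h4
  rw [← h5]
  exact (getLast_drop'' (C.WK x) i hi hdropne (C.WK_ne_nil x)).symm

theorem wk_back_aux {x y : V} (hfx : ¬ Covered C.M x) (hxR : x ∈ C.R)
    (hsx : ∃ w, C.ET true x w) (hfy : ¬ Covered C.M y) (hyR : y ∈ C.R)
    (hsy : ∃ w, C.ET true y w)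
    (hLL : (C.WK x).length ≤ (C.WK y).length)
    (h : (C.WK x).getLast (C.WK_ne_nil x) = (C.WK y).getLast (C.WK_ne_nil y)) :
    x = y := by
  have hLx := C.wk_len_ge2 hxR hsx
  have hLy := C.wk_len_ge2 hyR hsy
  have hex := C.wk_even hfx hxR hsx
  have hey := C.wk_even hfy hyR hsy
  set Lx := (C.WK x).length with hLxdef
  set Ly := (C.WK y).length with hLydef
  have key : ∀ k : ℕ, k < Lx → k < Ly →
      (C.WK x).get ⟨Lx - 1 - k, by omega⟩ = (C.WK y).get ⟨Ly - 1 - k, by omega⟩ := by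
    intro k
    induction k with
    | zero =>
      intro hkx hky
      have e1 : (C.WK x).getLast (C.WK_ne_nil x) = (C.WK x).get ⟨Lx - 1 - 0, by omega⟩ := by
        rw [List.getLast_eq_getElem, List.get_eq_getElem]
        congr 1
      have e2 : (C.WK y).getLast (C.WK_ne_nil y) = (C.WK y).get ⟨Ly - 1 - 0, by omega⟩ := by
        rw [List.getLast_eq_getElem, List.get_eq_getElem]
        congr 1
      rw [← e1, ← e2, h]
    | succ k ih =>
      intro hkx hky
      have hihp := ih (by omega) (by omega)
      have Ex := C.wk_types' (x := x) (Lx - 1 - (k+1)) (Lx - 1 - k) (by omega) (by omega)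
      have Ey := C.wk_types' (x := y) (Ly - 1 - (k+1)) (Ly - 1 - k) (by omega) (by omega)
      have hpar : (Lx - 1 - (k+1)) % 2 = (Ly - 1 - (k+1)) % 2 := by omega
      rw [typeAt_congr true hpar] at Ex
      rw [← hihp] at Ey
      have := C.ET_unique (C.ET_symm Ex) (C.ET_symm Ey)
      exact this
  rcases Nat.eq_or_lt_of_le hLL with hEq | hLt
  · have hk := key (Lx - 1) (by omega) (by omega)
    have ex : (C.WK x).get ⟨Lx - 1 - (Lx - 1), by omega⟩ = x := by
      rw [show (⟨Lx - 1 - (Lx - 1), by omega⟩ : Fin (C.WK x).length) = ⟨0, by omega⟩ from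
        Fin.mk_eq_mk.2 (by omega)]
      exact C.wk_get_zero _
    have ey : (C.WK y).get ⟨Ly - 1 - (Lx - 1), by omega⟩ = y := by
      rw [show (⟨Ly - 1 - (Lx - 1), by omega⟩ : Fin (C.WK y).length) = ⟨0, by omega⟩ from
        Fin.mk_eq_mk.2 (by omega)]
      exact C.wk_get_zero _
    rw [ex, ey] at hk
    exact hk
  · exfalso
    have hk := key (Lx - 1) (by omega) (by omega)
    have ex : (C.WK x).get ⟨Lx - 1 - (Lx - 1), by omega⟩ = x := by
      rw [show (⟨Lx - 1 - (Lx - 1), by omega⟩ : Fin (C.WK x).length) = ⟨0, by omega⟩ from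
        Fin.mk_eq_mk.2 (by omega)]
      exact C.wk_get_zero _
    rw [ex] at hk
    -- x occurs at position Ly - Lx ≥ 1 in WK y, arriving by an M-edge
    have ht1 : 1 ≤ Ly - 1 - (Lx - 1) := by omega
    have Ey := C.wk_types' (x := y) (Ly - 1 - (Lx - 1) - 1) (Ly - 1 - (Lx - 1))
      (by omega) (by omega)
    have hty : typeAt true (Ly - 1 - (Lx - 1) - 1) = false := by
      unfold typeAt
      rw [show (Ly - 1 - (Lx - 1) - 1) % 2 = 1 by omega]
      rfl
    rw [hty, ← hk] at Ey
    obtain ⟨hM, -⟩ := C.ET_false.1 Ey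
    exact hfx ⟨_, hM, Sym2.mem_mk_right _ _⟩

theorem wk_back_inj {x y : V} (hfx : ¬ Covered C.M x) (hxR : x ∈ C.R)
    (hsx : ∃ w, C.ET true x w) (hfy : ¬ Covered C.M y) (hyR : y ∈ C.R)
    (hsy : ∃ w, C.ET true y w)
    (h : (C.WK x).getLast (C.WK_ne_nil x) = (C.WK y).getLast (C.WK_ne_nil y)) :
    x = y := by
  rcases le_total (C.WK x).length (C.WK y).length with hle | hle
  · exact C.wk_back_aux hfx hxR hsx hfy hyR hsy hle h
  · exact (C.wk_back_aux hfy hyR hsy hfx hxR hsx hle h.symm).symm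

theorem count_le_two (v : V) : (C.S.filter (fun x => v ∈ C.WK x)).card ≤ 2 := by
  classical
  have hsub : ∀ x ∈ C.S.filter (fun x => v ∈ C.WK x),
      (C.WK x).getLast (C.WK_ne_nil x) ∈ ({C.gval v true, C.gval v false} : Finset V) := by
    intro x hx
    rw [Finset.mem_filter] at hx
    obtain ⟨hfree, hxR, -⟩ := C.S_spec hx.1
    obtain ⟨c, hc⟩ := C.wk_through hfree hxR hx.2
    rw [hc]
    cases c
    · exact Finset.mem_insert_of_mem (Finset.mem_singleton_self _)
    · exact Finset.mem_insert_self _ _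
  have hinj : Set.InjOn (fun x => (C.WK x).getLast (C.WK_ne_nil x))
      (C.S.filter (fun x => v ∈ C.WK x)) := by
    intro x hx y hy hxy
    have hx' := Finset.mem_filter.1 (Finset.mem_coe.1 hx)
    have hy' := Finset.mem_filter.1 (Finset.mem_coe.1 hy)
    obtain ⟨hfx, hxR, hsx⟩ := C.S_spec hx'.1
    obtain ⟨hfy, hyR, hsy⟩ := C.S_spec hy'.1
    exact C.wk_back_inj hfx hxR hsx hfy hyR hsy hxy
  calc (C.S.filter (fun x => v ∈ C.WK x)).card
      ≤ ({C.gval v true, C.gval v false} : Finset V).card :=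
        Finset.card_le_card_of_injOn _ hsub hinj
    _ ≤ 2 := Finset.card_insert_le _ _ |>.trans (by simp)

theorem rends_card {r : List V} (hr0 : r ∈ C.P0) : (rends r).card = 2 := by
  have hrP := (C.mem_P0.1 hr0).1
  have hK := C.hK
  have hrL : 2 ≤ r.length := by rw [C.P0_len hr0]; omega
  have hnd : r.Nodup := (C.hQP r hrP).1
  rw [rends, dif_pos hrL]
  rw [Finset.card_insert_of_notMem, Finset.card_singleton]
  rw [Finset.mem_singleton]
  intro h
  have := get_inj_of_nodup hnd _ _ h
  omega

theorem mem_rends_mem {r : List V} (hrL : 2 ≤ r.length) {a : V} (ha : a ∈ rends r) :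
    a ∈ r := by
  rcases (mem_rends hrL).1 ha with rfl | rfl <;> exact List.get_mem _ _

theorem S_card : C.S.card = 2 + 2 * C.P0.card := by
  classical
  have hK := C.hK
  have hdisj2 : Disjoint ({C.v0, C.vm} : Finset V) (C.P0.biUnion (fun r => rends r)) := by
    rw [Finset.disjoint_left]
    intro a ha hb
    rw [Finset.mem_biUnion] at hb
    obtain ⟨r, hr0, har⟩ := hb
    have hrP := (C.mem_P0.1 hr0).1
    have hrL : 2 ≤ r.length := by rw [C.P0_len hr0]; omega
    have har' : a ∈ r := mem_rends_mem hrL har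
    rw [Finset.mem_insert, Finset.mem_singleton] at ha
    rcases ha with rfl | rfl
    · exact C.v0_notin_path hrP har'
    · exact C.vm_notin_path hrP har'
  have hpair : ({C.v0, C.vm} : Finset V).card = 2 := by
    rw [Finset.card_insert_of_notMem (by simp [C.v0_ne_vm]), Finset.card_singleton]
  have hbi : (C.P0.biUnion (fun r => rends r)).card = 2 * C.P0.card := by
    rw [Finset.card_biUnion]
    · rw [Finset.sum_congr rfl (fun r hr0 => C.rends_card hr0), Finset.sum_const,
        smul_eq_mul, mul_comm]
    · intro r hr0 r' hr0' hne
      rw [Function.onFun, Finset.disjoint_left]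
      intro a ha ha'
      have hrL : 2 ≤ r.length := by rw [C.P0_len hr0]; omega
      have hrL' : 2 ≤ r'.length := by rw [C.P0_len hr0']; omega
      exact C.hdisj r (C.mem_P0.1 hr0).1 r' (C.mem_P0.1 hr0').1 hne a
        (mem_rends_mem hrL ha) (mem_rends_mem hrL' ha')
  rw [S, Finset.card_union_of_disjoint hdisj2, hpair, hbi]

theorem R_card : C.R.card ≤ (2 * C.K + 2) + C.P0.card * (2 * C.K + 1) := by
  classical
  have hsub : C.R ⊆ C.p.toFinset ∪ C.P0.biUnion (fun r => r.toFinset \ C.p.toFinset) := by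
    intro v hv
    rw [R, Finset.mem_union] at hv
    rcases hv with h | h
    · exact Finset.mem_union_left _ h
    · rw [U, Finset.mem_biUnion] at h
      obtain ⟨r, hr0, hvr⟩ := h
      by_cases hvp : v ∈ C.p.toFinset
      · exact Finset.mem_union_left _ hvp
      · exact Finset.mem_union_right _
          (Finset.mem_biUnion.2 ⟨r, hr0, Finset.mem_sdiff.2 ⟨hvr, hvp⟩⟩)
  have h1 := Finset.card_le_card hsub
  have h2 := Finset.card_union_le (C.p.toFinset)
    (C.P0.biUnion (fun r => r.toFinset \ C.p.toFinset))
  have h3 := Finset.card_biUnion_le (s := C.P0) (t := fun r => r.toFinset \ C.p.toFinset)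
  have hplen : C.p.toFinset.card ≤ 2 * C.K + 2 := by
    rw [List.toFinset_card_of_nodup C.hp'.1]
    exact C.hlen
  have heach : ∀ r ∈ C.P0, (r.toFinset \ C.p.toFinset).card ≤ 2 * C.K + 1 := by
    intro r hr0
    obtain ⟨hrP, v, hvp, hvr⟩ := C.mem_P0.1 hr0
    have hnd : r.Nodup := (C.hQP r hrP).1
    have hcard : r.toFinset.card = 2 * C.K + 2 := by
      rw [List.toFinset_card_of_nodup hnd, C.P0_len hr0]
    have hss : r.toFinset \ C.p.toFinset ⊂ r.toFinset := by
      refine Finset.ssubset_iff_of_subset Finset.sdiff_subset |>.2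
        ⟨v, List.mem_toFinset.2 hvr, ?_⟩
      rw [Finset.mem_sdiff]
      push_neg
      intro
      exact List.mem_toFinset.2 hvp
    have := Finset.card_lt_card hss
    omega
  have hsum : ∑ r ∈ C.P0, (r.toFinset \ C.p.toFinset).card ≤ C.P0.card * (2 * C.K + 1) := by
    calc ∑ r ∈ C.P0, (r.toFinset \ C.p.toFinset).card
        ≤ ∑ _r ∈ C.P0, (2 * C.K + 1) := Finset.sum_le_sum heach
      _ = C.P0.card * (2 * C.K + 1) := by rw [Finset.sum_const, smul_eq_mul]
  calc C.R.card ≤ _ := h1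
    _ ≤ _ := h2
    _ ≤ C.p.toFinset.card + ∑ r ∈ C.P0, (r.toFinset \ C.p.toFinset).card :=
        Nat.add_le_add_left h3 _
    _ ≤ (2 * C.K + 2) + C.P0.card * (2 * C.K + 1) := Nat.add_le_add hplen hsum

theorem P0_empty : C.P0 = ∅ := by
  classical
  by_contra hne'
  obtain ⟨r0, hr0⟩ := Finset.nonempty_of_ne_empty hne'
  have hn1 : 1 ≤ C.P0.card := Finset.card_pos.2 ⟨r0, hr0⟩
  set n := C.P0.card with hndef
  -- lower bound on the total size of the walks
  have hlow : ∀ x ∈ C.S, 2 * C.K + 2 ≤ (C.WK x).toFinset.card := by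
    intro x hx
    obtain ⟨hf, hR, hs⟩ := C.S_spec hx
    rw [List.toFinset_card_of_nodup (C.wk_nodup hf)]
    exact C.wk_long hf hR hs
  have hlow2 : C.S.card * (2 * C.K + 2) ≤ ∑ x ∈ C.S, (C.WK x).toFinset.card := by
    have := Finset.card_nsmul_le_sum C.S (fun x => (C.WK x).toFinset.card) (2 * C.K + 2) hlow
    rwa [smul_eq_mul] at this
  -- rewrite the sum by counting vertices of R
  have hmid : ∑ x ∈ C.S, (C.WK x).toFinset.card
      = ∑ v ∈ C.R, (C.S.filter (fun x => v ∈ C.WK x)).card := by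
    have hstep : ∀ x ∈ C.S, (C.WK x).toFinset.card
        = ∑ v ∈ C.R, (if v ∈ C.WK x then 1 else 0) := by
      intro x hx
      obtain ⟨-, hR, -⟩ := C.S_spec hx
      have hfe : C.R.filter (fun v => v ∈ C.WK x) = (C.WK x).toFinset := by
        apply Finset.ext
        intro v
        rw [Finset.mem_filter, List.mem_toFinset]
        constructor
        · rintro ⟨-, h⟩; exact h
        · intro h; exact ⟨C.wk_sub_R hR v h, h⟩
      rw [← hfe, Finset.card_filter]
    rw [Finset.sum_congr rfl hstep, Finset.sum_comm]
    apply Finset.sum_congr rfl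
    intro v hv
    rw [Finset.card_filter]
  have hup : ∑ v ∈ C.R, (C.S.filter (fun x => v ∈ C.WK x)).card ≤ C.R.card * 2 := by
    have := Finset.sum_le_card_nsmul C.R (fun v => (C.S.filter (fun x => v ∈ C.WK x)).card) 2
      (fun v _ => C.count_le_two v)
    rwa [smul_eq_mul] at this
  have hS := C.S_card
  have hR := C.R_card
  rw [← hndef] at hS hR
  have hfinal : (2 + 2 * n) * (2 * C.K + 2) ≤ ((2 * C.K + 2) + n * (2 * C.K + 1)) * 2 := by
    calc (2 + 2 * n) * (2 * C.K + 2) = C.S.card * (2 * C.K + 2) := by rw [hS]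
      _ ≤ ∑ x ∈ C.S, (C.WK x).toFinset.card := hlow2
      _ = _ := hmid
      _ ≤ C.R.card * 2 := hup
      _ ≤ ((2 * C.K + 2) + n * (2 * C.K + 1)) * 2 := Nat.mul_le_mul_right 2 hR
  nlinarith [hn1, C.hK]

theorem main : IsAugPath C.G C.M C.p := by
  have hP0 := C.P0_empty
  have hnotouch : ∀ e : Sym2 V, e ∈ pathEdges C.p → e ∉ flipSet C.P := by
    rintro e hpe ⟨r, hr, hper⟩
    rw [mem_pathEdges_iff] at hpe
    obtain ⟨i, hi, rfl⟩ := hpe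
    have hvp : C.p.get ⟨i, by omega⟩ ∈ C.p := List.get_mem _ _
    have hvr : C.p.get ⟨i, by omega⟩ ∈ r :=
      mem_of_mem_pathEdges hper (Sym2.mem_mk_left _ _)
    have : r ∈ C.P0 := C.mem_P0.2 ⟨hr, _, hvp, hvr⟩
    rw [hP0] at this
    exact absurd this (Finset.notMem_empty r)
  obtain ⟨hnd, hch, hL, hpar, halt, -⟩ := C.hp'
  refine ⟨hnd, hch, hL, hpar, ?_, ?_⟩
  · intro i h
    have h2 := halt i h
    rw [pathEdges_get] at h2 ⊢
    have hi1 : i + 1 < C.p.length := by rw [pathEdges_length] at h; omega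
    have hF : s(C.p.get ⟨i, by omega⟩, C.p.get ⟨i+1, by omega⟩) ∉ flipSet C.P :=
      hnotouch _ (mem_pathEdges_iff.2 ⟨i, hi1, rfl⟩)
    rw [← h2]
    constructor
    · intro hM
      exact Set.mem_symmDiff.2 (Or.inl ⟨hM, hF⟩)
    · intro hM1
      rcases Set.mem_symmDiff.1 hM1 with ⟨h1, -⟩ | ⟨h1, -⟩
      · exact h1
      · exact absurd h1 hF
  · intro v hv
    rcases hv with hv | hv
    · rw [head?_get' (by omega)] at hv
      have := Option.some.inj hv
      rw [← this]
      exact C.v0_free_M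
    · rw [getLast?_get' (by omega)] at hv
      have := Option.some.inj hv
      rw [← this]
      exact C.vm_free_M

end HK

/-- Let `M` be a matching with no augmenting paths of length `≤ 2K-1`
(edges), and let `M'` be obtained by flipping a set `P` of pairwise vertex-disjoint
`(2K+1)`-augmenting paths. Then any augmenting path for `M'` of length `≤ 2K+1`
is already an augmenting path for `M`. -/
theorem augPath_of_flipped_augPath (G : SimpleGraph V) (M : Set (Sym2 V))
    (hM : IsMatching G M) (K : ℕ) (hK : 1 ≤ K)
    (hno : ∀ r : List V, IsAugPath G M r → r.length ≤ 2 * K → False)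
    (P : Set (List V))
    (hP : ∀ r ∈ P, IsAugPath G M r ∧ r.length = 2 * K + 2)
    (hdisj : ∀ r ∈ P, ∀ s ∈ P, r ≠ s → ∀ v : V, v ∈ r → v ∉ s)
    (p : List V)
    (hp : IsAugPath G (symmDiff M {e | ∃ r ∈ P, e ∈ pathEdges r}) p)
    (hlen : p.length ≤ 2 * K + 2) :
    IsAugPath G M p :=
  HK.main ⟨G, M, hM, K, hK, hno, P, hP, hdisj, p, hp, hlen⟩
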